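/- (Theorem 4.2, sufficiency: irreducibility of η'₁ over ℂ.) Let n ≥ 3 and t, v ∈ ℂ with v ≠ 0, v ≠ 1, and (2−t)·v ≠ t. Let 𝒮 = { L_i(!![1−t, t; 2−t, t−1]), L_i(!![0, v; v⁻¹, 0]) : 1 ≤ i ≤ n−1 } ∪ {I_n}. Then every submodule U of ℂⁿ that is invariant under 𝒮 (i.e. M.mulVec x ∈ U for all M ∈ 𝒮 and x ∈ U) satisfies U = ⊥ or U = ⊤. That is, the representation η'₁ of VST_n with these parameters is irreducible. -/

import Mathlib

/-- `Lmat n i M` is the `n × n` matrix agreeing with the identity outside rows and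
columns `i, i+1` (0-indexed), with `2 × 2` block `M` there. -/
def Lmat {R : Type*} [Zero R] [One R] (n : ℕ) (i : ℕ) (M : Matrix (Fin 2) (Fin 2) R) :
    Matrix (Fin n) (Fin n) R :=
  Matrix.of fun a b =>
    if a.val = i ∧ b.val = i then M 0 0
    else if a.val = i ∧ b.val = i + 1 then M 0 1
    else if a.val = i + 1 ∧ b.val = i then M 1 0
    else if a.val = i + 1 ∧ b.val = i + 1 then M 1 1
    else if a.val = b.val then 1 else 0

private lemma lmat_mulVec {n j : ℕ} (hj : j + 1 < n) (M : Matrix (Fin 2) (Fin 2) ℂ)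
    (x : Fin n → ℂ) (a : Fin n) :
    (Lmat n j M).mulVec x a =
      if a.val = j then
        M 0 0 * x ⟨j, Nat.lt_of_succ_lt hj⟩ + M 0 1 * x ⟨j + 1, hj⟩
      else if a.val = j + 1 then
        M 1 0 * x ⟨j, Nat.lt_of_succ_lt hj⟩ + M 1 1 * x ⟨j + 1, hj⟩
      else x a := by
  classical
  have hne : (⟨j, Nat.lt_of_succ_lt hj⟩ : Fin n) ≠ ⟨j + 1, hj⟩ := by
    simp [Fin.ext_iff]
  have hsum : (Lmat n j M).mulVec x a = ∑ b : Fin n, Lmat n j M a b * x b := rfl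
  by_cases ha0 : a.val = j
  · rw [hsum, ← Finset.sum_subset
      (Finset.subset_univ ({⟨j, Nat.lt_of_succ_lt hj⟩, ⟨j + 1, hj⟩} : Finset (Fin n)))
      (fun b _ hb => ?_), Finset.sum_pair hne]
    · have e0 : Lmat n j M a ⟨j, Nat.lt_of_succ_lt hj⟩ = M 0 0 := by
        simp [Lmat, ha0]
      have e1 : Lmat n j M a ⟨j + 1, hj⟩ = M 0 1 := by
        simp [Lmat, ha0]
      rw [e0, e1, if_pos ha0]
    · simp only [Finset.mem_insert, Finset.mem_singleton] at hb
      push_neg at hb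
      have hb0 : b.val ≠ j := fun h => hb.1 (Fin.ext (by simp [h]))
      have hb1 : b.val ≠ j + 1 := fun h => hb.2 (Fin.ext (by simp [h]))
      have : Lmat n j M a b = 0 := by
        simp [Lmat, ha0, hb0, hb1]
        omega
      simp [this]
  · by_cases ha1 : a.val = j + 1
    · rw [hsum, ← Finset.sum_subset
        (Finset.subset_univ ({⟨j, Nat.lt_of_succ_lt hj⟩, ⟨j + 1, hj⟩} : Finset (Fin n)))
        (fun b _ hb => ?_), Finset.sum_pair hne]
      · have e0 : Lmat n j M a ⟨j, Nat.lt_of_succ_lt hj⟩ = M 1 0 := by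
          simp [Lmat, ha0, ha1]
        have e1 : Lmat n j M a ⟨j + 1, hj⟩ = M 1 1 := by
          simp [Lmat, ha0, ha1]
        rw [e0, e1, if_neg ha0, if_pos ha1]
      · simp only [Finset.mem_insert, Finset.mem_singleton] at hb
        push_neg at hb
        have hb0 : b.val ≠ j := fun h => hb.1 (Fin.ext (by simp [h]))
        have hb1 : b.val ≠ j + 1 := fun h => hb.2 (Fin.ext (by simp [h]))
        have : Lmat n j M a b = 0 := by
          simp [Lmat, ha0, ha1, hb0, hb1]
          omega
        simp [this]
    · rw [hsum, Finset.sum_eq_single a, if_neg ha0, if_neg ha1]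
      · have : Lmat n j M a a = 1 := by simp [Lmat, ha0, ha1]
        rw [this, one_mul]
      · intro b _ hba
        have : Lmat n j M a b = 0 := by
          simp [Lmat, ha0, ha1]
          intro h
          exact hba (Fin.ext h.symm)
        simp [this]
      · intro h; exact absurd (Finset.mem_univ a) h

/-- the `k`-th standard basis vector -/
private def ev (n : ℕ) (k : Fin n) : Fin n → ℂ := fun j => if k = j then 1 else 0

private lemma L1 {n : ℕ} {t v : ℂ} (hv0 : v ≠ 0) (hvt : (2 - t) * v ≠ t)
    {U : Submodule ℂ (Fin n → ℂ)}
    (hS : ∀ (j : ℕ), j + 1 < n → ∀ x ∈ U,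
      (Lmat n j !![1 - t, t; 2 - t, t - 1]).mulVec x ∈ U)
    (hN : ∀ (j : ℕ), j + 1 < n → ∀ x ∈ U,
      (Lmat n j !![0, v; v⁻¹, 0]).mulVec x ∈ U)
    {x : Fin n → ℂ} (hx : x ∈ U) {j : ℕ} (hj : j + 1 < n)
    (hcase : (x ⟨j, Nat.lt_of_succ_lt hj⟩ ≠ 0 ∧ x ⟨j + 1, hj⟩ = 0) ∨
             (x ⟨j, Nat.lt_of_succ_lt hj⟩ = 0 ∧ x ⟨j + 1, hj⟩ ≠ 0)) :
    ev n ⟨j, Nat.lt_of_succ_lt hj⟩ ∈ U := by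
  classical
  have hvt' : (2 - t) * v - t ≠ 0 := sub_ne_zero.mpr hvt
  have hyS : (Lmat n j !![1 - t, t; 2 - t, t - 1]).mulVec x - x ∈ U :=
    U.sub_mem (hS j hj x hx) hx
  have hyN : (Lmat n j !![0, v; v⁻¹, 0]).mulVec x - x ∈ U :=
    U.sub_mem (hN j hj x hx) hx
  rcases hcase with ⟨hb, h0⟩ | ⟨h0, hb⟩
  · -- (b, 0) case
    set c : ℂ := x ⟨j, Nat.lt_of_succ_lt hj⟩ * ((2 - t) - t * v⁻¹) with hc
    have hcne : c ≠ 0 := by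
      apply mul_ne_zero hb
      intro h
      apply hvt'
      have hfac : ((2 - t) - t * v⁻¹) * v = (2 - t) * v - t := by
        field_simp
      rw [← hfac, h, zero_mul]
    have key : c • ev n ⟨j, Nat.lt_of_succ_lt hj⟩ =
        v⁻¹ • ((Lmat n j !![1 - t, t; 2 - t, t - 1]).mulVec x - x)
        - (2 - t) • ((Lmat n j !![0, v; v⁻¹, 0]).mulVec x - x) := by
      funext a
      simp only [Pi.smul_apply, Pi.sub_apply, smul_eq_mul]
      rw [lmat_mulVec hj, lmat_mulVec hj]
      by_cases ha0 : a.val = j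
      · have haj : (⟨j, Nat.lt_of_succ_lt hj⟩ : Fin n) = a := Fin.ext ha0.symm
        have hev : ev n ⟨j, Nat.lt_of_succ_lt hj⟩ a = 1 := by simp [ev, haj]
        rw [if_pos ha0, if_pos ha0, hev, ← haj, h0, hc]
        simp only [Matrix.of_apply, Matrix.cons_val', Matrix.cons_val_zero,
          Matrix.cons_val_one, Matrix.head_cons, Matrix.head_fin_const,
          Matrix.empty_val', Matrix.cons_val_fin_one]
        ring
      · have hev : ev n ⟨j, Nat.lt_of_succ_lt hj⟩ a = 0 := by
          simp [ev, Fin.ext_iff, Ne.symm ha0]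
        by_cases ha1 : a.val = j + 1
        · have haj : (⟨j + 1, hj⟩ : Fin n) = a := Fin.ext ha1.symm
          rw [if_neg ha0, if_neg ha0, if_pos ha1, if_pos ha1, hev, ← haj, h0]
          simp only [Matrix.of_apply, Matrix.cons_val', Matrix.cons_val_zero,
            Matrix.cons_val_one, Matrix.head_cons, Matrix.head_fin_const,
            Matrix.empty_val', Matrix.cons_val_fin_one]
          ring
        · rw [if_neg ha0, if_neg ha0, if_neg ha1, if_neg ha1, hev]
          ring
    have hmem : c • ev n ⟨j, Nat.lt_of_succ_lt hj⟩ ∈ U := by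
      rw [key]; exact U.sub_mem (U.smul_mem _ hyS) (U.smul_mem _ hyN)
    have := U.smul_mem c⁻¹ hmem
    rwa [smul_smul, inv_mul_cancel₀ hcne, one_smul] at this
  · -- (0, b) case
    set c : ℂ := x ⟨j + 1, hj⟩ * (t + (t - 2) * v) with hc
    have hcne : c ≠ 0 := by
      apply mul_ne_zero hb
      intro h
      apply hvt'
      linear_combination -h
    have key : c • ev n ⟨j, Nat.lt_of_succ_lt hj⟩ =
        ((Lmat n j !![1 - t, t; 2 - t, t - 1]).mulVec x - x)
        + (t - 2) • ((Lmat n j !![0, v; v⁻¹, 0]).mulVec x - x) := by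
      funext a
      simp only [Pi.smul_apply, Pi.add_apply, Pi.sub_apply, smul_eq_mul]
      rw [lmat_mulVec hj, lmat_mulVec hj]
      by_cases ha0 : a.val = j
      · have haj : (⟨j, Nat.lt_of_succ_lt hj⟩ : Fin n) = a := Fin.ext ha0.symm
        have hev : ev n ⟨j, Nat.lt_of_succ_lt hj⟩ a = 1 := by simp [ev, haj]
        rw [if_pos ha0, if_pos ha0, hev, ← haj, h0, hc]
        simp only [Matrix.of_apply, Matrix.cons_val', Matrix.cons_val_zero,
          Matrix.cons_val_one, Matrix.head_cons, Matrix.head_fin_const,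
          Matrix.empty_val', Matrix.cons_val_fin_one]
        ring
      · have hev : ev n ⟨j, Nat.lt_of_succ_lt hj⟩ a = 0 := by
          simp [ev, Fin.ext_iff, Ne.symm ha0]
        by_cases ha1 : a.val = j + 1
        · have haj : (⟨j + 1, hj⟩ : Fin n) = a := Fin.ext ha1.symm
          rw [if_neg ha0, if_neg ha0, if_pos ha1, if_pos ha1, hev, ← haj, h0]
          simp only [Matrix.of_apply, Matrix.cons_val', Matrix.cons_val_zero,
            Matrix.cons_val_one, Matrix.head_cons, Matrix.head_fin_const,
            Matrix.empty_val', Matrix.cons_val_fin_one]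
          ring
        · rw [if_neg ha0, if_neg ha0, if_neg ha1, if_neg ha1, hev]
          ring
    have hmem : c • ev n ⟨j, Nat.lt_of_succ_lt hj⟩ ∈ U := by
      rw [key]; exact U.add_mem hyS (U.smul_mem _ hyN)
    have := U.smul_mem c⁻¹ hmem
    rwa [smul_smul, inv_mul_cancel₀ hcne, one_smul] at this

private lemma ev_val_eq {n : ℕ} {k a : Fin n} (h : k.val = a.val) : ev n k a = 1 := by
  simp [ev, Fin.ext h]

private lemma ev_val_ne {n : ℕ} {k a : Fin n} (h : ¬k.val = a.val) : ev n k a = 0 := by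
  simp only [ev, if_neg (fun hh : k = a => h (congrArg Fin.val hh))]

private lemma stepN {n : ℕ} {v : ℂ} (hv0 : v ≠ 0) {U : Submodule ℂ (Fin n → ℂ)}
    (hN : ∀ (j : ℕ), j + 1 < n → ∀ x ∈ U,
      (Lmat n j !![0, v; v⁻¹, 0]).mulVec x ∈ U)
    {j : ℕ} (hj : j + 1 < n) :
    ev n ⟨j, Nat.lt_of_succ_lt hj⟩ ∈ U ↔ ev n ⟨j + 1, hj⟩ ∈ U := by
  have hvi : v⁻¹ ≠ 0 := inv_ne_zero hv0
  constructor
  · intro h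
    have hmem := hN j hj _ h
    have key : (Lmat n j !![0, v; v⁻¹, 0]).mulVec (ev n ⟨j, Nat.lt_of_succ_lt hj⟩)
        = v⁻¹ • ev n ⟨j + 1, hj⟩ := by
      funext a
      rw [Pi.smul_apply, smul_eq_mul, lmat_mulVec hj]
      by_cases ha0 : a.val = j
      · rw [if_pos ha0, ev_val_eq (by simp), ev_val_ne (by simp),
          ev_val_ne (by simp [ha0]; try omega)]
        simp only [Matrix.of_apply, Matrix.cons_val', Matrix.cons_val_zero,
          Matrix.cons_val_one, Matrix.head_cons, Matrix.head_fin_const,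
          Matrix.empty_val', Matrix.cons_val_fin_one]
        ring
      · by_cases ha1 : a.val = j + 1
        · rw [if_neg ha0, if_pos ha1, ev_val_eq (by simp), ev_val_ne (by simp),
            ev_val_eq (by simp [ha1])]
          simp only [Matrix.of_apply, Matrix.cons_val', Matrix.cons_val_zero,
            Matrix.cons_val_one, Matrix.head_cons, Matrix.head_fin_const,
            Matrix.empty_val', Matrix.cons_val_fin_one]
          ring
        · rw [if_neg ha0, if_neg ha1, ev_val_ne (by simp; try omega),
            ev_val_ne (by simp [Ne.symm ha1])]
          ring
    rw [key] at hmem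
    have := U.smul_mem v hmem
    rwa [smul_smul, mul_inv_cancel₀ hv0, one_smul] at this
  · intro h
    have hmem := hN j hj _ h
    have key : (Lmat n j !![0, v; v⁻¹, 0]).mulVec (ev n ⟨j + 1, hj⟩)
        = v • ev n ⟨j, Nat.lt_of_succ_lt hj⟩ := by
      funext a
      rw [Pi.smul_apply, smul_eq_mul, lmat_mulVec hj]
      by_cases ha0 : a.val = j
      · rw [if_pos ha0, ev_val_ne (by simp), ev_val_eq (by simp),
          ev_val_eq (by simp [ha0])]
        simp only [Matrix.of_apply, Matrix.cons_val', Matrix.cons_val_zero,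
          Matrix.cons_val_one, Matrix.head_cons, Matrix.head_fin_const,
          Matrix.empty_val', Matrix.cons_val_fin_one]
        ring
      · by_cases ha1 : a.val = j + 1
        · rw [if_neg ha0, if_pos ha1, ev_val_ne (by simp), ev_val_eq (by simp),
            ev_val_ne (by simp [Ne.symm ha0])]
          simp only [Matrix.of_apply, Matrix.cons_val', Matrix.cons_val_zero,
            Matrix.cons_val_one, Matrix.head_cons, Matrix.head_fin_const,
            Matrix.empty_val', Matrix.cons_val_fin_one]
          ring
        · rw [if_neg ha0, if_neg ha1, ev_val_ne (by simp [Ne.symm ha1]),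
            ev_val_ne (by simp [Ne.symm ha0])]
          ring
    rw [key] at hmem
    have := U.smul_mem v⁻¹ hmem
    rwa [smul_smul, inv_mul_cancel₀ hv0, one_smul] at this

/-- (Theorem 4.2, sufficiency, over `ℂ`.) If `v ≠ 0`, `v ≠ 1` and `(2 - t)·v ≠ t`, then
the only submodules of `ℂⁿ` invariant under all the matrices of the representation
`η'₁` are `⊥` and `⊤`: the representation `η'₁` is irreducible. -/
theorem eta1_prime_irreducible (n : ℕ) (hn : 3 ≤ n) (t v : ℂ)
    (hv0 : v ≠ 0) (hv1 : v ≠ 1) (hvt : (2 - t) * v ≠ t)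
    (U : Submodule ℂ (Fin n → ℂ))
    (hU : ∀ M ∈ ({M | (∃ i : Fin (n - 1), M = Lmat n i.val !![1 - t, t; 2 - t, t - 1]) ∨
                      (∃ i : Fin (n - 1), M = Lmat n i.val !![0, v; v⁻¹, 0]) ∨
                      M = 1} :
        Set (Matrix (Fin n) (Fin n) ℂ)),
      ∀ x ∈ U, M.mulVec x ∈ U) :
    U = ⊥ ∨ U = ⊤ := by

  classical
  by_cases hbot : U = ⊥
  · exact Or.inl hbot
  right
  obtain ⟨x, hx, hxne⟩ := (Submodule.ne_bot_iff U).mp hbot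
  have hS : ∀ (j : ℕ), j + 1 < n → ∀ y ∈ U,
      (Lmat n j !![1 - t, t; 2 - t, t - 1]).mulVec y ∈ U := by
    intro j hj y hy
    exact hU _ (Or.inl ⟨⟨j, by omega⟩, rfl⟩) y hy
  have hN : ∀ (j : ℕ), j + 1 < n → ∀ y ∈ U,
      (Lmat n j !![0, v; v⁻¹, 0]).mulVec y ∈ U := by
    intro j hj y hy
    exact hU _ (Or.inr (Or.inl ⟨⟨j, by omega⟩, rfl⟩)) y hy
  have h01 : 0 + 1 < n := by omega
  have h12 : 1 + 1 < n := by omega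
  -- Step 1: some basis vector lies in U
  have hk : ∃ (j : ℕ) (hj : j + 1 < n), ev n ⟨j, Nat.lt_of_succ_lt hj⟩ ∈ U := by
    by_cases hiff : ∀ (j : ℕ) (hj : j + 1 < n),
        (x ⟨j, Nat.lt_of_succ_lt hj⟩ = 0 ↔ x ⟨j + 1, hj⟩ = 0)
    · -- every adjacent pair both zero or both nonzero ⇒ all coords nonzero
      have hx0 : x ⟨0, by omega⟩ ≠ 0 := by
        have hprop : ∀ (m : ℕ) (hm : m < n), x ⟨0, by omega⟩ = 0 → x ⟨m, hm⟩ = 0 := by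
          intro m
          induction m with
          | zero => intro hm h; exact h
          | succ k ih =>
            intro hm h
            exact (hiff k hm).mp (ih (by omega) h)
        intro h0
        apply hxne
        funext a
        have := hprop a.val a.isLt h0
        simpa using this
      -- z = x - N₀ x
      have hz : x - (Lmat n 0 !![0, v; v⁻¹, 0]).mulVec x ∈ U :=
        U.sub_mem hx (hN 0 h01 x hx)
      have hz0 : (x - (Lmat n 0 !![0, v; v⁻¹, 0]).mulVec x) ⟨0, Nat.lt_of_succ_lt h01⟩
          = x ⟨0, Nat.lt_of_succ_lt h01⟩ - v * x ⟨1, h01⟩ := by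
        rw [Pi.sub_apply, lmat_mulVec h01, if_pos rfl]
        simp only [Matrix.of_apply, Matrix.cons_val', Matrix.cons_val_zero,
          Matrix.cons_val_one, Matrix.head_cons, Matrix.head_fin_const,
          Matrix.empty_val', Matrix.cons_val_fin_one]
        ring
      have hz1 : (x - (Lmat n 0 !![0, v; v⁻¹, 0]).mulVec x) ⟨1, h01⟩
          = x ⟨1, h01⟩ - v⁻¹ * x ⟨0, Nat.lt_of_succ_lt h01⟩ := by
        rw [Pi.sub_apply, lmat_mulVec h01, if_neg (by norm_num [Fin.val_mk]), if_pos rfl]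
        simp only [Matrix.of_apply, Matrix.cons_val', Matrix.cons_val_zero,
          Matrix.cons_val_one, Matrix.head_cons, Matrix.head_fin_const,
          Matrix.empty_val', Matrix.cons_val_fin_one]
        ring
      have hz2 : (x - (Lmat n 0 !![0, v; v⁻¹, 0]).mulVec x) ⟨2, h12⟩ = 0 := by
        rw [Pi.sub_apply, lmat_mulVec h01, if_neg (by norm_num [Fin.val_mk]), if_neg (by norm_num [Fin.val_mk]), sub_self]
      by_cases hc1 : (x - (Lmat n 0 !![0, v; v⁻¹, 0]).mulVec x) ⟨1, h01⟩ = 0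
      · by_cases hc0 : (x - (Lmat n 0 !![0, v; v⁻¹, 0]).mulVec x) ⟨0, Nat.lt_of_succ_lt h01⟩ = 0
        · -- z = 0 on coords 0,1 : use z' = x - S₀ x
          have hz' : x - (Lmat n 0 !![1 - t, t; 2 - t, t - 1]).mulVec x ∈ U :=
            U.sub_mem hx (hS 0 h01 x hx)
          have hz'0 : (x - (Lmat n 0 !![1 - t, t; 2 - t, t - 1]).mulVec x) ⟨0, Nat.lt_of_succ_lt h01⟩
              = t * x ⟨0, Nat.lt_of_succ_lt h01⟩ - t * x ⟨1, h01⟩ := by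
            rw [Pi.sub_apply, lmat_mulVec h01, if_pos rfl]
            simp only [Matrix.of_apply, Matrix.cons_val', Matrix.cons_val_zero,
              Matrix.cons_val_one, Matrix.head_cons, Matrix.head_fin_const,
              Matrix.empty_val', Matrix.cons_val_fin_one]
            ring
          have hz'1 : (x - (Lmat n 0 !![1 - t, t; 2 - t, t - 1]).mulVec x) ⟨1, h01⟩
              = (2 - t) * x ⟨1, h01⟩ - (2 - t) * x ⟨0, Nat.lt_of_succ_lt h01⟩ := by
            rw [Pi.sub_apply, lmat_mulVec h01, if_neg (by norm_num [Fin.val_mk]), if_pos rfl]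
            simp only [Matrix.of_apply, Matrix.cons_val', Matrix.cons_val_zero,
              Matrix.cons_val_one, Matrix.head_cons, Matrix.head_fin_const,
              Matrix.empty_val', Matrix.cons_val_fin_one]
            ring
          have hz'2 : (x - (Lmat n 0 !![1 - t, t; 2 - t, t - 1]).mulVec x) ⟨2, h12⟩ = 0 := by
            rw [Pi.sub_apply, lmat_mulVec h01, if_neg (by norm_num [Fin.val_mk]), if_neg (by norm_num [Fin.val_mk]), sub_self]
          by_cases hd1 : (x - (Lmat n 0 !![1 - t, t; 2 - t, t - 1]).mulVec x) ⟨1, h01⟩ = 0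
          · by_cases hd0 : (x - (Lmat n 0 !![1 - t, t; 2 - t, t - 1]).mulVec x)
                ⟨0, Nat.lt_of_succ_lt h01⟩ = 0
            · -- contradiction: x₀ = 0
              exfalso
              rw [hz0] at hc0
              rw [hz'0] at hd0
              rw [hz'1] at hd1
              have hx01 : x ⟨0, Nat.lt_of_succ_lt h01⟩ = x ⟨1, h01⟩ := by
                linear_combination (hd0 - hd1) / 2
              apply hx0
              have : (1 - v) * x ⟨0, Nat.lt_of_succ_lt h01⟩ = 0 := by
                linear_combination hc0 - v * hx01
              rcases mul_eq_zero.mp this with h | h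
              · exact absurd (by linear_combination -h) hv1
              · exact h
            · exact ⟨0, h01, L1 hv0 hvt hS hN hz' h01 (Or.inl ⟨hd0, hd1⟩)⟩
          · exact ⟨1, h12, L1 hv0 hvt hS hN hz' h12 (Or.inl ⟨hd1, hz'2⟩)⟩
        · exact ⟨0, h01, L1 hv0 hvt hS hN hz h01 (Or.inl ⟨hc0, hc1⟩)⟩
      · exact ⟨1, h12, L1 hv0 hvt hS hN hz h12 (Or.inl ⟨hc1, hz2⟩)⟩
    · -- some adjacent pair has exactly one zero
      push_neg at hiff
      obtain ⟨j, hj, hne⟩ := hiff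
      rcases hne with ⟨h1, h2⟩ | ⟨h1, h2⟩
      · exact ⟨j, hj, L1 hv0 hvt hS hN hx hj (Or.inr ⟨h1, h2⟩)⟩
      · exact ⟨j, hj, L1 hv0 hvt hS hN hx hj (Or.inl ⟨h1, h2⟩)⟩
  -- Step 2: propagate to all basis vectors
  obtain ⟨j0, hj0, hev0⟩ := hk
  have hdown : ∀ (m : ℕ) (hm : m + 1 < n),
      ev n ⟨m, Nat.lt_of_succ_lt hm⟩ ∈ U → ev n ⟨0, by omega⟩ ∈ U := by
    intro m
    induction m with
    | zero => intro hm h; exact h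
    | succ k ih =>
      intro hm h
      have hk' : k + 1 < n := by omega
      exact ih hk' ((stepN hv0 hN hk').mpr h)
  have hzero : ev n ⟨0, by omega⟩ ∈ U := hdown j0 hj0 hev0
  have hall : ∀ (m : ℕ) (hm : m < n), ev n ⟨m, hm⟩ ∈ U := by
    intro m
    induction m with
    | zero => intro hm; exact hzero
    | succ k ih =>
      intro hm
      exact (stepN hv0 hN hm).mp (ih (by omega))
  rw [Submodule.eq_top_iff']
  intro y
  rw [pi_eq_sum_univ y]
  exact Submodule.sum_mem _ fun i _ => Submodule.smul_mem _ _ (by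
    have := hall i.val i.isLt
    convert this using 1
    funext j
    simp only [ev])
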